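/- arXiv:1203.4481 — 3 statements merged into one kernel-verified Lean document; each statement's English description precedes it below -/
import Mathlib

section
/- Let A : ℝ^{m×n} → ℝ^p be a linear operator satisfying the rank restricted isometry property with constant δ_k ∈ (0,1), i.e., (1−δ_k)‖X‖_F² ≤ ‖A(X)‖₂² ≤ (1+δ_k)‖X‖_F² for all X with rank(X) ≤ k. Let S be a set of orthonormal rank-1 matrices such that rank(P_S X) ≤ k for all X, where P_S denotes orthogonal projection onto span(S). Then for every v ∈ ℝ^p, ‖P_S(A*(v))‖_F ≤ √(1+δ_k) ‖v‖₂. -/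
open scoped BigOperators RealInnerProductSpace

noncomputable def frobInner {m n : ℕ} (X Y : Matrix (Fin m) (Fin n) ℝ) : ℝ :=
  ∑ i, ∑ j, X i j * Y i j

noncomputable def frobNorm {m n : ℕ} (X : Matrix (Fin m) (Fin n) ℝ) : ℝ :=
  Real.sqrt (frobInner X X)

lemma frobInner_comm' {m n : ℕ} (X Y : Matrix (Fin m) (Fin n) ℝ) :
    frobInner X Y = frobInner Y X := by
  simp [frobInner, mul_comm]

/-- If `A` satisfies the rank-RIP with constant `δ ∈ (0,1)` at rank `k`, and `P_S`
is the orthogonal projection onto the span of a set of orthonormal rank-one matrices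
with `rank (P_S X) ≤ k` for all `X`, then `‖P_S (A* v)‖_F ≤ √(1+δ) ‖v‖` for all `v`. -/
theorem rip_adjoint_projection_bound {m n p k : ℕ}
    (δ : ℝ) (hδ : δ ∈ Set.Ioo (0 : ℝ) 1)
    (A : Matrix (Fin m) (Fin n) ℝ →ₗ[ℝ] EuclideanSpace ℝ (Fin p))
    (hRIP : ∀ X : Matrix (Fin m) (Fin n) ℝ, X.rank ≤ k →
      (1 - δ) * frobNorm X ^ 2 ≤ ‖A X‖ ^ 2 ∧ ‖A X‖ ^ 2 ≤ (1 + δ) * frobNorm X ^ 2)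
    (Astar : EuclideanSpace ℝ (Fin p) →ₗ[ℝ] Matrix (Fin m) (Fin n) ℝ)
    (hadj : ∀ (X : Matrix (Fin m) (Fin n) ℝ) (v : EuclideanSpace ℝ (Fin p)),
      (inner ℝ (A X) v : ℝ) = frobInner X (Astar v))
    (P : Matrix (Fin m) (Fin n) ℝ →ₗ[ℝ] Matrix (Fin m) (Fin n) ℝ)
    (hidem : ∀ X, P (P X) = P X)
    (hsa : ∀ X Y, frobInner (P X) Y = frobInner X (P Y))
    (hrank : ∀ X, (P X).rank ≤ k)
    (v : EuclideanSpace ℝ (Fin p)) :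
    frobNorm (P (Astar v)) ≤ Real.sqrt (1 + δ) * ‖v‖ := by

  set Z := P (Astar v) with hZ
  have hZZ : frobInner Z Z = frobNorm Z ^ 2 := by
    have h0 : 0 ≤ frobInner Z Z := by
      apply Finset.sum_nonneg; intro i _; apply Finset.sum_nonneg; intro j _
      exact mul_self_nonneg _
    rw [frobNorm, Real.sq_sqrt h0]
  have hZnn : 0 ≤ frobNorm Z := Real.sqrt_nonneg _
  have hδ1 : (0:ℝ) ≤ 1 + δ := by linarith [hδ.1]
  -- key: ‖Z‖² = ⟪A Z, v⟫
  have key : frobNorm Z ^ 2 = (inner ℝ (A Z) v : ℝ) := by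
    rw [hadj Z v, ← hZZ, frobInner_comm' Z (Astar v), hZ, hsa, hidem]
  have hAZ : ‖A Z‖ ≤ Real.sqrt (1 + δ) * frobNorm Z := by
    have h2 := (hRIP Z (hrank _)).2
    have := Real.sqrt_le_sqrt h2
    rwa [Real.sqrt_sq (norm_nonneg _), Real.sqrt_mul hδ1, Real.sqrt_sq hZnn] at this
  have hcs : (inner ℝ (A Z) v : ℝ) ≤ ‖A Z‖ * ‖v‖ := real_inner_le_norm _ _
  have main : frobNorm Z ^ 2 ≤ (Real.sqrt (1 + δ) * ‖v‖) * frobNorm Z := by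
    calc frobNorm Z ^ 2 = (inner ℝ (A Z) v : ℝ) := key
    _ ≤ ‖A Z‖ * ‖v‖ := hcs
    _ ≤ (Real.sqrt (1 + δ) * frobNorm Z) * ‖v‖ := by
        exact mul_le_mul_of_nonneg_right hAZ (norm_nonneg _)
    _ = (Real.sqrt (1 + δ) * ‖v‖) * frobNorm Z := by ring
  rcases eq_or_lt_of_le hZnn with h | h
  · rw [← h]; positivity
  · have := le_of_mul_le_mul_right (by rw [sq] at main; linarith [main] : frobNorm Z * frobNorm Z ≤ (Real.sqrt (1 + δ) * ‖v‖) * frobNorm Z) h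
    exact this
end

section
/- Let X ∈ ℝ^{m×n} have SVD X = UΣVᵀ and let P_k(X) = U_k Σ_k V_kᵀ be a truncated SVD keeping the k largest singular values (k < rank(X)). Then for every matrix W ∈ ℝ^{m×n} with rank(W) ≤ k, ‖P_k(X) − X‖_F ≤ ‖W − X‖_F. -/
open scoped BigOperators

open Finset Matrix

section EYAux

lemma EY_frobInner_eq_trace {m n : ℕ} (A B : Matrix (Fin m) (Fin n) ℝ) :
    frobInner A B = (Aᵀ * B).trace := by
  unfold frobInner
  simp only [Matrix.trace, Matrix.diag, Matrix.mul_apply, Matrix.transpose_apply]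
  exact Finset.sum_comm

lemma EY_frobInner_self_nonneg {m n : ℕ} (A : Matrix (Fin m) (Fin n) ℝ) :
    0 ≤ frobInner A A := by
  unfold frobInner
  exact Finset.sum_nonneg fun i _ => Finset.sum_nonneg fun j _ => mul_self_nonneg _

lemma EY_frob_expand_sub {m n : ℕ} (A B : Matrix (Fin m) (Fin n) ℝ) :
    frobInner (A - B) (A - B) = frobInner A A - 2 * frobInner A B + frobInner B B := by
  unfold frobInner
  have h : ∀ (i : Fin m) (j : Fin n), (A i j - B i j) * (A i j - B i j)
      = A i j * A i j - 2 * (A i j * B i j) + B i j * B i j := fun i j => by ring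
  simp_rw [Matrix.sub_apply, h, Finset.sum_add_distrib, Finset.sum_sub_distrib, Finset.mul_sum]

lemma EY_frob_conj {m n : ℕ} (U : Matrix (Fin m) (Fin m) ℝ) (V : Matrix (Fin n) (Fin n) ℝ)
    (hU : Uᵀ * U = 1) (hV : Vᵀ * V = 1) (A B : Matrix (Fin m) (Fin n) ℝ) :
    frobInner (U * A * Vᵀ) (U * B * Vᵀ) = frobInner A B := by
  rw [EY_frobInner_eq_trace, EY_frobInner_eq_trace]
  have : (U * A * Vᵀ)ᵀ * (U * B * Vᵀ) = V * (Aᵀ * B) * Vᵀ := by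
    simp only [Matrix.transpose_mul, Matrix.transpose_transpose]
    calc V * (Aᵀ * Uᵀ) * (U * B * Vᵀ) = V * (Aᵀ * ((Uᵀ * U) * B)) * Vᵀ := by
          simp only [Matrix.mul_assoc]
      _ = V * (Aᵀ * B) * Vᵀ := by rw [hU, Matrix.one_mul]
  rw [this, Matrix.trace_mul_comm, ← Matrix.mul_assoc, hV, Matrix.one_mul]

lemma EY_sum_ite_fin (n : ℕ) (c : ℕ) (x : ℝ) :
    ∑ j : Fin n, (if c = (j:ℕ) then x else 0) = if c < n then x else 0 := by
  rw [Fin.sum_univ_eq_sum_range (fun j => if c = j then x else 0)]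
  rw [Finset.sum_ite_eq (Finset.range n) c (fun _ => x)]
  simp [Finset.mem_range]

lemma EY_filter_range_lt (m k : ℕ) (hk : k ≤ m) :
    (Finset.range m).filter (fun i => i < k) = Finset.range k := by
  ext i; simp [Finset.mem_filter, Finset.mem_range]; omega

lemma EY_sum_ite_range (m k : ℕ) (hk : k ≤ m) (f : ℕ → ℝ) :
    ∑ i ∈ Finset.range m, (if i < k then f i else 0) = ∑ i ∈ Finset.range k, f i := by
  rw [Finset.sum_ite, Finset.sum_const_zero, add_zero, EY_filter_range_lt m k hk]

lemma EY_sum_mul_le (m k : ℕ) (hkm : k ≤ m) (a t : ℕ → ℝ) (ha : Antitone a)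
    (ha0 : ∀ i, 0 ≤ a i) (ht0 : ∀ i, 0 ≤ t i) (ht1 : ∀ i, t i ≤ 1)
    (hts : ∑ i ∈ Finset.range m, t i ≤ (k:ℝ)) :
    ∑ i ∈ Finset.range m, a i * t i ≤ ∑ i ∈ Finset.range k, a i := by
  have h1 : ∀ i ∈ Finset.range m,
      a i * t i ≤ (if i < k then a i else 0) + a k * (t i - (if i < k then 1 else 0)) := by
    intro i _
    by_cases h : i < k
    · simp only [h, if_pos]
      nlinarith [mul_nonneg (sub_nonneg.2 (ha h.le)) (sub_nonneg.2 (ht1 i))]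
    · simp only [h, if_neg, if_false]
      nlinarith [mul_nonneg (sub_nonneg.2 (ha (not_lt.1 h))) (ht0 i)]
  calc ∑ i ∈ Finset.range m, a i * t i
      ≤ ∑ i ∈ Finset.range m, ((if i < k then a i else 0) + a k * (t i - (if i < k then 1 else 0))) :=
        Finset.sum_le_sum h1
    _ = ∑ i ∈ Finset.range k, a i + a k * (∑ i ∈ Finset.range m, t i - k) := by
        rw [Finset.sum_add_distrib]
        congr 1
        · exact EY_sum_ite_range m k hkm a
        · rw [← Finset.mul_sum]
          congr 1
          rw [Finset.sum_sub_distrib]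
          congr 1
          rw [EY_sum_ite_range m k hkm (fun _ => (1:ℝ))]
          simp
    _ ≤ ∑ i ∈ Finset.range k, a i := by nlinarith [ha0 k]

lemma EY_exists_proj {m n k : ℕ} (W : Matrix (Fin m) (Fin n) ℝ) (hW : W.rank ≤ k) :
    ∃ (r : ℕ) (v : Fin r → EuclideanSpace ℝ (Fin m)),
      r ≤ k ∧ (∀ p q, ∑ c, v p c * v q c = if p = q then 1 else 0) ∧
      ∀ j, (WithLp.toLp 2 (fun i => W i j) : EuclideanSpace ℝ (Fin m)) ∈ Submodule.span ℝ (Set.range v) := by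
  classical
  set E := EuclideanSpace ℝ (Fin m) with hE
  set L : Submodule ℝ E := Submodule.span ℝ (Set.range (fun j => (WithLp.toLp 2 (fun i => W i j) : E))) with hL
  refine ⟨Module.finrank ℝ L, fun r => (stdOrthonormalBasis ℝ L r : E), ?_, ?_, ?_⟩
  · refine le_trans ?_ (le_trans (le_of_eq (Matrix.rank_eq_finrank_span_cols W).symm) hW)
    let e : E ≃ₗ[ℝ] (Fin m → ℝ) := WithLp.linearEquiv 2 ℝ (Fin m → ℝ)
    have h1 : Submodule.map (e : E →ₗ[ℝ] (Fin m → ℝ)) L = Submodule.span ℝ (Set.range W.col) := by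
      rw [hL, Submodule.map_span]
      congr 1
      ext x
      constructor
      · rintro ⟨y, ⟨j, rfl⟩, rfl⟩; exact ⟨j, rfl⟩
      · rintro ⟨j, rfl⟩; exact ⟨WithLp.toLp 2 (fun i => W i j), ⟨j, rfl⟩, rfl⟩
    rw [← h1]
    exact le_of_eq (LinearEquiv.finrank_map_eq e L).symm
  · intro p q
    have h := (stdOrthonormalBasis ℝ L).orthonormal
    rw [orthonormal_iff_ite] at h
    have h2 := h q p
    rw [Submodule.coe_inner, PiLp.inner_apply] at h2
    simp at h2
    refine h2.trans ?_
    rcases eq_or_ne p q with rfl | hpq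
    · simp
    · simp [hpq, hpq.symm]
  · intro j
    have hspan : Submodule.span ℝ (Set.range (fun r => ((stdOrthonormalBasis ℝ L r : E)))) = L := by
      have he : (fun r => ((stdOrthonormalBasis ℝ L r : E))) = L.subtype ∘ (stdOrthonormalBasis ℝ L) := rfl
      rw [he, Set.range_comp, ← Submodule.map_span, ← OrthonormalBasis.coe_toBasis (stdOrthonormalBasis ℝ L),
        Module.Basis.span_eq, Submodule.map_top, Submodule.range_subtype]
    rw [hspan]
    exact Submodule.subset_span ⟨j, rfl⟩

lemma EY_proj_fix {m r : ℕ} (v : Fin r → EuclideanSpace ℝ (Fin m))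
    (hv : ∀ p q, ∑ c, v p c * v q c = if p = q then 1 else 0)
    (x : EuclideanSpace ℝ (Fin m)) (hx : x ∈ Submodule.span ℝ (Set.range v)) (a : Fin m) :
    ∑ c, (∑ s, v s a * v s c) * x c = x a := by
  induction hx using Submodule.span_induction with
  | mem y hy =>
    obtain ⟨p, rfl⟩ := hy
    calc ∑ c, (∑ s, v s a * v s c) * v p c
        = ∑ s, v s a * (∑ c, v s c * v p c) := by
          simp_rw [Finset.sum_mul, Finset.mul_sum]
          rw [Finset.sum_comm]
          apply Finset.sum_congr rfl; intros; apply Finset.sum_congr rfl; intros; ring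
      _ = v p a := by
          simp_rw [hv]
          simp
  | zero => simp
  | add y z hy hz ihy ihz =>
    simp only [PiLp.add_apply, mul_add, Finset.sum_add_distrib, ihy, ihz]
  | smul t y hy ihy =>
    simp only [PiLp.smul_apply, smul_eq_mul]
    rw [← ihy]
    rw [Finset.mul_sum]
    apply Finset.sum_congr rfl; intros; ring

lemma EY_swap23 {α β γ : Type*} [Fintype α] [Fintype β] [Fintype γ] (f : α → β → γ → ℝ) :
    ∑ i, ∑ j, ∑ l, f i j l = ∑ i, ∑ l, ∑ j, f i j l :=
  Finset.sum_congr rfl fun _ _ => Finset.sum_comm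

lemma EY_Qdiag {m r : ℕ} (U : Matrix (Fin m) (Fin m) ℝ) (v : Fin r → Fin m → ℝ) (a : Fin m) :
    (Uᵀ * (Matrix.of fun a b => ∑ s, v s a * v s b) * U) a a
      = ∑ s, (∑ c, U c a * v s c) * (∑ d, U d a * v s d) := by
  simp only [Matrix.mul_apply, Matrix.transpose_apply, Matrix.of_apply,
    Finset.mul_sum, Finset.sum_mul]
  rw [EY_swap23]
  rw [Finset.sum_comm]
  rw [EY_swap23]
  apply Finset.sum_congr rfl; intros
  apply Finset.sum_congr rfl; intros
  apply Finset.sum_congr rfl; intros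
  ring

lemma EY_w_ortho {m r : ℕ} (U : Matrix (Fin m) (Fin m) ℝ) (hU : U * Uᵀ = 1)
    (v : Fin r → Fin m → ℝ)
    (hv : ∀ p q, ∑ c, v p c * v q c = if p = q then 1 else 0) (p q : Fin r) :
    ∑ i, (∑ c, U c i * v p c) * (∑ d, U d i * v q d) = if p = q then 1 else 0 := by
  have hUU : ∀ c d : Fin m, ∑ i, U c i * U d i = if c = d then 1 else 0 := by
    intro c d
    have := congrFun (congrFun hU c) d
    simpa [Matrix.mul_apply, Matrix.one_apply, Matrix.transpose_apply] using this
  simp only [Finset.mul_sum, Finset.sum_mul]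
  rw [Finset.sum_comm]
  rw [EY_swap23]
  have : ∀ c d : Fin m, ∑ i, U c i * v p c * (U d i * v q d)
      = (if c = d then 1 else 0) * (v p c * v q d) := by
    intro c d
    rw [← hUU c d, Finset.sum_mul]
    apply Finset.sum_congr rfl; intros; ring
  simp_rw [this]
  simp only [ite_mul, one_mul, zero_mul, Finset.sum_ite_eq, Finset.sum_ite_eq',
    Finset.mem_univ, if_true]
  exact hv p q

lemma EY_ortho_sq_sum {m r : ℕ} (w : Fin r → Fin m → ℝ)
    (hw : ∀ p q, ∑ i, w p i * w q i = if p = q then 1 else 0) (a : Fin m) :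
    ∑ i, (∑ s, w s a * w s i) * (∑ s, w s a * w s i) = ∑ s, w s a * w s a := by
  have h : ∀ i : Fin m, (∑ s, w s a * w s i) * (∑ s, w s a * w s i)
      = ∑ p, ∑ q, (w p a * w q a) * (w p i * w q i) := by
    intro i
    rw [Finset.sum_mul_sum]
    apply Finset.sum_congr rfl; intros; apply Finset.sum_congr rfl; intros; ring
  simp_rw [h]
  rw [Finset.sum_comm]
  have h2 : ∀ p, ∑ i : Fin m, ∑ q, (w p a * w q a) * (w p i * w q i)
      = ∑ q, (w p a * w q a) * ∑ i, w p i * w q i := by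
    intro p
    rw [Finset.sum_comm]
    apply Finset.sum_congr rfl; intros; rw [Finset.mul_sum]
  simp_rw [h2, hw]
  simp [mul_ite]

lemma EY_bessel {m r : ℕ} (w : Fin r → Fin m → ℝ)
    (hw : ∀ p q, ∑ i, w p i * w q i = if p = q then 1 else 0) (a : Fin m) :
    ∑ s, w s a * w s a ≤ 1 := by
  have h0 : (0:ℝ) ≤ ∑ i, ((if a = i then (1:ℝ) else 0) - ∑ s, w s a * w s i)
      * ((if a = i then 1 else 0) - ∑ s, w s a * w s i) :=
    Finset.sum_nonneg fun i _ => mul_self_nonneg _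
  have expand : ∑ i, ((if a = i then (1:ℝ) else 0) - ∑ s, w s a * w s i)
      * ((if a = i then 1 else 0) - ∑ s, w s a * w s i)
      = 1 - ∑ s, w s a * w s a := by
    have h : ∀ i : Fin m, ((if a = i then (1:ℝ) else 0) - ∑ s, w s a * w s i)
        * ((if a = i then 1 else 0) - ∑ s, w s a * w s i)
        = ((if a = i then (1:ℝ) else 0) * (if a = i then 1 else 0))
          - 2 * ((if a = i then (1:ℝ) else 0) * (∑ s, w s a * w s i))
          + (∑ s, w s a * w s i) * (∑ s, w s a * w s i) := by
      intro i; ring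
    simp_rw [h, Finset.sum_add_distrib, Finset.sum_sub_distrib, EY_ortho_sq_sum w hw a]
    rw [← Finset.mul_sum]
    have e1 : ∑ i : Fin m, (if a = i then (1:ℝ) else 0) * (if a = i then 1 else 0) = 1 := by
      simp [ite_mul, Finset.sum_ite_eq]
    have e2 : ∑ i : Fin m, (if a = i then (1:ℝ) else 0) * (∑ s, w s a * w s i)
        = ∑ s, w s a * w s a := by
      simp [ite_mul, Finset.sum_ite_eq]
    rw [e1, e2]; ring
  linarith [expand ▸ h0]

lemma EY_trace_QS {m n : ℕ} (σ : ℕ → ℝ) (S : Matrix (Fin m) (Fin n) ℝ)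
    (hS : ∀ i j, S i j = if (i : ℕ) = (j : ℕ) then σ (i : ℕ) else 0)
    (Q : Matrix (Fin m) (Fin m) ℝ) :
    (Sᵀ * (Q * S)).trace = ∑ a : Fin m, (if (a:ℕ) < n then σ (a:ℕ) * σ (a:ℕ) else 0) * Q a a := by
  have hSS : ∀ a b : Fin m, ∑ j, S a j * S b j
      = if a = b then (if (a:ℕ) < n then σ (a:ℕ) * σ (a:ℕ) else 0) else 0 := by
    intro a b
    simp_rw [hS]
    simp only [ite_mul, mul_ite, zero_mul, mul_zero]
    rw [Fin.sum_univ_eq_sum_range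
      (fun j => if (b:ℕ) = j then (if (a:ℕ) = j then σ (a:ℕ) * σ (b:ℕ) else 0) else 0)]
    rw [Finset.sum_ite_eq (Finset.range n) (b:ℕ)
      (fun j => if (a:ℕ) = j then σ (a:ℕ) * σ (b:ℕ) else 0)]
    simp only [Finset.mem_range]
    by_cases h1 : (a:ℕ) < n <;> by_cases h2 : a = b
    · subst h2; simp [h1]
    · have : ¬ ((a:ℕ) = (b:ℕ)) := fun h => h2 (Fin.val_injective h)
      simp [h1, h2, this]
    · subst h2; simp [h1]
    · have : ¬ ((a:ℕ) = (b:ℕ)) := fun h => h2 (Fin.val_injective h)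
      simp [h1, h2, this]
  have expand : (Sᵀ * (Q * S)).trace = ∑ a : Fin m, ∑ b : Fin m, Q a b * (∑ j, S a j * S b j) := by
    simp only [Matrix.trace, Matrix.diag, Matrix.mul_apply, Matrix.transpose_apply,
      Finset.mul_sum, Finset.sum_mul]
    rw [Finset.sum_comm]
    rw [EY_swap23]
    apply Finset.sum_congr rfl; intros
    apply Finset.sum_congr rfl; intros
    apply Finset.sum_congr rfl; intros
    ring
  rw [expand]
  apply Finset.sum_congr rfl; intro a _
  simp_rw [hSS, mul_ite, mul_zero, Finset.sum_ite_eq, Finset.mem_univ, if_true]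
  by_cases h : (a:ℕ) < n <;> simp [h, mul_comm]

end EYAux

/-- Eckart–Young: the truncated SVD `U_k Σ_k V_kᵀ` (keeping the `k` largest
singular values, `k < rank X`) is a best rank-`k` approximation of `X` in
the Frobenius norm. -/
theorem eckart_young_frobenius {m n k : ℕ}
    (X : Matrix (Fin m) (Fin n) ℝ)
    (U : Matrix (Fin m) (Fin m) ℝ) (V : Matrix (Fin n) (Fin n) ℝ)
    (σ : ℕ → ℝ)
    (hU : U * U.transpose = 1) (hV : V * V.transpose = 1)
    (hσmono : Antitone σ) (hσnonneg : ∀ i, 0 ≤ σ i)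
    (S : Matrix (Fin m) (Fin n) ℝ)
    (hS : ∀ i j, S i j = if (i : ℕ) = (j : ℕ) then σ (i : ℕ) else 0)
    (hX : X = U * S * V.transpose)
    (hk : k < X.rank)
    (Sk : Matrix (Fin m) (Fin n) ℝ)
    (hSk : ∀ i j, Sk i j = if (i : ℕ) = (j : ℕ) ∧ (i : ℕ) < k then σ (i : ℕ) else 0) :
    ∀ W : Matrix (Fin m) (Fin n) ℝ, W.rank ≤ k →
      frobNorm (U * Sk * V.transpose - X) ≤ frobNorm (W - X) := by
  classical
  intro W hW
  have hU' : Uᵀ * U = 1 := mul_eq_one_comm.mp hU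
  have hV' : Vᵀ * V = 1 := mul_eq_one_comm.mp hV
  have hkm : k ≤ m := le_of_lt (lt_of_lt_of_le hk (Matrix.rank_le_height X))
  have hkn : k ≤ n := le_of_lt (lt_of_lt_of_le hk (Matrix.rank_le_width X))
  -- LHS computation
  have hL1 : U * Sk * Vᵀ - X = U * (Sk - S) * Vᵀ := by
    rw [hX, Matrix.mul_sub U Sk S, Matrix.sub_mul]
  have hent1 : ∀ (i : Fin m) (j : Fin n), (Sk - S) i j * (Sk - S) i j
      = if (i:ℕ) = (j:ℕ) then (if ¬ (i:ℕ) < k then σ (i:ℕ) * σ (i:ℕ) else 0) else 0 := by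
    intro i j
    rw [Matrix.sub_apply, hSk, hS]
    split_ifs <;> first | ring1 | (exfalso; omega)
  have hLHS2 : frobInner (Sk - S) (Sk - S)
      = ∑ i ∈ Finset.range m, (if i < n then (if ¬ i < k then σ i * σ i else 0) else 0) := by
    unfold frobInner
    calc ∑ i, ∑ j, (Sk - S) i j * (Sk - S) i j
        = ∑ i : Fin m, (if (i:ℕ) < n then (if ¬ (i:ℕ) < k then σ (i:ℕ) * σ (i:ℕ) else 0) else 0) := by
          apply Finset.sum_congr rfl; intro i _
          simp_rw [hent1 i]
          exact EY_sum_ite_fin n (i:ℕ) _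
      _ = _ := Fin.sum_univ_eq_sum_range
            (fun i => if i < n then (if ¬ i < k then σ i * σ i else 0) else 0) m
  have hent2 : ∀ (i : Fin m) (j : Fin n), S i j * S i j
      = if (i:ℕ) = (j:ℕ) then σ (i:ℕ) * σ (i:ℕ) else 0 := by
    intro i j
    rw [hS]
    by_cases h1 : (i:ℕ) = (j:ℕ) <;> simp [h1]
  have hXX : frobInner X X = ∑ i ∈ Finset.range m, (if i < n then σ i * σ i else 0) := by
    rw [hX, EY_frob_conj U V hU' hV']
    unfold frobInner
    calc ∑ i, ∑ j, S i j * S i j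
        = ∑ i : Fin m, (if (i:ℕ) < n then σ (i:ℕ) * σ (i:ℕ) else 0) := by
          apply Finset.sum_congr rfl; intro i _
          simp_rw [hent2 i]
          exact EY_sum_ite_fin n (i:ℕ) _
      _ = _ := Fin.sum_univ_eq_sum_range (fun i => if i < n then σ i * σ i else 0) m
  have harith : ∑ i ∈ Finset.range m, (if i < n then (if ¬ i < k then σ i * σ i else 0) else 0)
      = (∑ i ∈ Finset.range m, if i < n then σ i * σ i else 0)
        - ∑ i ∈ Finset.range k, σ i * σ i := by
    rw [eq_sub_iff_add_eq, ← EY_sum_ite_range m k hkm (fun i => σ i * σ i),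
      ← Finset.sum_add_distrib]
    apply Finset.sum_congr rfl; intro i _
    by_cases h1 : i < n <;> by_cases h2 : i < k
    · simp [h1, h2]
    · simp [h1, h2]
    · exact absurd (lt_of_lt_of_le h2 hkn) h1
    · simp [h1, h2]
  -- Projection machinery
  obtain ⟨r, v, hrk, hv, hcol⟩ := EY_exists_proj W hW
  set P : Matrix (Fin m) (Fin m) ℝ := Matrix.of (fun a b => ∑ s, v s a * v s b) with hPdef
  have hPapp : ∀ a b, P a b = ∑ s, v s a * v s b := fun a b => rfl
  have hPsym : Pᵀ = P := by
    ext a b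
    rw [Matrix.transpose_apply, hPapp, hPapp]
    exact Finset.sum_congr rfl fun s _ => mul_comm _ _
  have hPfix : ∀ (x : EuclideanSpace ℝ (Fin m)), x ∈ Submodule.span ℝ (Set.range v) →
      ∀ a, ∑ c, P a c * x c = x a := fun x hx a => EY_proj_fix v hv x hx a
  have hPP : P * P = P := by
    ext a b
    rw [Matrix.mul_apply]
    calc ∑ c, P a c * P c b = ∑ c, ∑ t, P a c * (v t c * v t b) := by
          apply Finset.sum_congr rfl; intro c _; rw [hPapp c b, Finset.mul_sum]
      _ = ∑ t, (∑ c, P a c * v t c) * v t b := by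
          rw [Finset.sum_comm]
          apply Finset.sum_congr rfl; intro t _
          rw [Finset.sum_mul]
          apply Finset.sum_congr rfl; intros; ring
      _ = ∑ t, v t a * v t b := by
          apply Finset.sum_congr rfl; intro t _
          rw [hPfix (v t) (Submodule.subset_span ⟨t, rfl⟩) a]
      _ = P a b := (hPapp a b).symm
  have hPW : P * W = W := by
    ext a j
    rw [Matrix.mul_apply]
    exact hPfix (WithLp.toLp 2 (fun i => W i j)) (hcol j) a
  have hGH : W - X = P * (W - X) - (1 - P) * X := by
    have h : P * (W - X) - (1 - P) * X = P * W - X := by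
      rw [Matrix.mul_sub, Matrix.sub_mul, Matrix.one_mul]
      abel
    rw [h, hPW]
  have hcross : frobInner (P * (W - X)) ((1 - P) * X) = 0 := by
    rw [EY_frobInner_eq_trace]
    have hz : Pᵀ * (1 - P) = 0 := by
      rw [hPsym, Matrix.mul_sub, Matrix.mul_one, hPP, sub_self]
    have h : (P * (W - X))ᵀ * ((1 - P) * X) = 0 := by
      rw [Matrix.transpose_mul]
      calc (W - X)ᵀ * Pᵀ * ((1 - P) * X) = (W - X)ᵀ * ((Pᵀ * (1 - P)) * X) := by
            simp only [Matrix.mul_assoc]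
        _ = 0 := by rw [hz, Matrix.zero_mul, Matrix.mul_zero]
    rw [h, Matrix.trace_zero]
  have hsplit : frobInner (W - X) (W - X)
      = frobInner (P * (W - X)) (P * (W - X)) + frobInner ((1 - P) * X) ((1 - P) * X) := by
    conv_lhs => rw [hGH]
    rw [EY_frob_expand_sub, hcross]
    ring
  have h1P : frobInner ((1 - P) * X) ((1 - P) * X)
      = frobInner X X - (Xᵀ * (P * X)).trace := by
    rw [EY_frobInner_eq_trace, EY_frobInner_eq_trace]
    have e1 : (1 - P)ᵀ = 1 - P := by
      rw [Matrix.transpose_sub, Matrix.transpose_one, hPsym]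
    have e2 : (1 - P) * (1 - P) = 1 - P := by
      rw [Matrix.mul_sub, Matrix.mul_one, Matrix.sub_mul, Matrix.one_mul, hPP]
      abel
    have h : ((1 - P) * X)ᵀ * ((1 - P) * X) = Xᵀ * X - Xᵀ * (P * X) := by
      rw [Matrix.transpose_mul, e1]
      calc Xᵀ * (1 - P) * ((1 - P) * X) = Xᵀ * (((1 - P) * (1 - P)) * X) := by
            simp only [Matrix.mul_assoc]
        _ = Xᵀ * ((1 - P) * X) := by rw [e2]
        _ = Xᵀ * X - Xᵀ * (P * X) := by
            rw [Matrix.sub_mul, Matrix.one_mul, Matrix.mul_sub]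
    rw [h, Matrix.trace_sub]
  set Q : Matrix (Fin m) (Fin m) ℝ := Uᵀ * P * U with hQdef
  have htr2 : (Xᵀ * (P * X)).trace = (Sᵀ * (Q * S)).trace := by
    rw [hX, hQdef]
    have h : (U * S * Vᵀ)ᵀ * (P * (U * S * Vᵀ)) = V * ((Sᵀ * ((Uᵀ * P * U) * S)) * Vᵀ) := by
      simp only [Matrix.transpose_mul, Matrix.transpose_transpose, Matrix.mul_assoc]
    rw [h, Matrix.trace_mul_comm, Matrix.mul_assoc, hV', Matrix.mul_one]
  -- w family and diagonal of Q
  set w : Fin r → Fin m → ℝ := fun s i => ∑ c, U c i * v s c with hwdef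
  have hw : ∀ p q, ∑ i, w p i * w q i = if p = q then 1 else 0 := by
    intro p q
    have := EY_w_ortho U hU (fun s c => v s c) hv p q
    simpa [hwdef] using this
  have hQaa : ∀ a, Q a a = ∑ s, w s a * w s a := by
    intro a
    have := EY_Qdiag U (fun s c => v s c) a
    rw [hQdef, hPdef]
    simpa [hwdef] using this
  set tQ : ℕ → ℝ := fun i => if h : i < m then Q ⟨i, h⟩ ⟨i, h⟩ else 0 with htQdef
  have htQa : ∀ a : Fin m, tQ (a:ℕ) = Q a a := by
    intro a
    simp [htQdef, a.isLt]
  have htQ0 : ∀ i, 0 ≤ tQ i := by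
    intro i
    rw [htQdef]
    by_cases h : i < m
    · simp only [h, dif_pos]
      rw [hQaa]
      exact Finset.sum_nonneg fun s _ => mul_self_nonneg _
    · simp [h]
  have htQ1 : ∀ i, tQ i ≤ 1 := by
    intro i
    rw [htQdef]
    by_cases h : i < m
    · simp only [h, dif_pos]
      rw [hQaa]
      exact EY_bessel w hw _
    · simp [h]
  have htQsum : ∑ i ∈ Finset.range m, tQ i ≤ (k:ℝ) := by
    have e1 : ∑ i ∈ Finset.range m, tQ i = ∑ a : Fin m, Q a a := by
      rw [← Fin.sum_univ_eq_sum_range tQ m]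
      exact Finset.sum_congr rfl fun a _ => htQa a
    rw [e1]
    have e2 : ∑ a : Fin m, Q a a = (r : ℝ) := by
      calc ∑ a : Fin m, Q a a = ∑ a : Fin m, ∑ s, w s a * w s a :=
            Finset.sum_congr rfl fun a _ => hQaa a
        _ = ∑ s, ∑ a : Fin m, w s a * w s a := Finset.sum_comm
        _ = ∑ _s : Fin r, (1:ℝ) := by
            apply Finset.sum_congr rfl; intro s _
            simpa using hw s s
        _ = (r : ℝ) := by simp
    rw [e2]
    exact_mod_cast hrk
  have hfinal1 : (Sᵀ * (Q * S)).trace ≤ ∑ i ∈ Finset.range k, σ i * σ i := by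
    rw [EY_trace_QS σ S hS Q]
    have hstep1 : ∑ a : Fin m, (if (a:ℕ) < n then σ (a:ℕ) * σ (a:ℕ) else 0) * Q a a
        = ∑ i ∈ Finset.range m, (if i < n then σ i * σ i else 0) * tQ i := by
      rw [← Fin.sum_univ_eq_sum_range (fun i => (if i < n then σ i * σ i else 0) * tQ i) m]
      apply Finset.sum_congr rfl; intro a _
      rw [htQa a]
    rw [hstep1]
    have hstep2 : ∑ i ∈ Finset.range m, (if i < n then σ i * σ i else 0) * tQ i
        ≤ ∑ i ∈ Finset.range m, (σ i * σ i) * tQ i := by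
      apply Finset.sum_le_sum
      intro i _
      by_cases h : i < n
      · simp [h]
      · simp only [h, if_false, zero_mul]
        exact mul_nonneg (mul_self_nonneg _) (htQ0 i)
    refine le_trans hstep2 ?_
    apply EY_sum_mul_le m k hkm (fun i => σ i * σ i) tQ
    · intro i j hij
      exact mul_le_mul (hσmono hij) (hσmono hij) (hσnonneg j) (hσnonneg i)
    · intro i; exact mul_self_nonneg _
    · exact htQ0
    · exact htQ1
    · exact htQsum
  -- Putting everything together
  have main : frobInner (U * Sk * Vᵀ - X) (U * Sk * Vᵀ - X) ≤ frobInner (W - X) (W - X) := by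
    calc frobInner (U * Sk * Vᵀ - X) (U * Sk * Vᵀ - X)
        = frobInner (Sk - S) (Sk - S) := by rw [hL1, EY_frob_conj U V hU' hV']
      _ = ∑ i ∈ Finset.range m, (if i < n then (if ¬ i < k then σ i * σ i else 0) else 0) := hLHS2
      _ = (∑ i ∈ Finset.range m, if i < n then σ i * σ i else 0)
            - ∑ i ∈ Finset.range k, σ i * σ i := harith
      _ = frobInner X X - ∑ i ∈ Finset.range k, σ i * σ i := by rw [hXX]
      _ ≤ frobInner X X - (Sᵀ * (Q * S)).trace := by linarith [hfinal1]
      _ = frobInner X X - (Xᵀ * (P * X)).trace := by rw [htr2]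
      _ = frobInner ((1 - P) * X) ((1 - P) * X) := h1P.symm
      _ ≤ frobInner (P * (W - X)) (P * (W - X)) + frobInner ((1 - P) * X) ((1 - P) * X) := by
            linarith [EY_frobInner_self_nonneg (P * (W - X))]
      _ = frobInner (W - X) (W - X) := hsplit.symm
  unfold frobNorm
  exact Real.sqrt_le_sqrt main
end

section
/- Under the setting of the ADMiRA least-squares step, the projected component satisfies the bound ‖P_{S_i}(V(i) − X*)‖_F ≤ δ_{3k} ‖V(i) − X*‖_F + √(1+δ_{2k}) ‖ε‖₂. -/
open scoped BigOperators

namespace AdmiraAux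

variable {m n p : ℕ}

lemma frobInner_comm (X Y : Matrix (Fin m) (Fin n) ℝ) : frobInner X Y = frobInner Y X := by
  simp [frobInner, mul_comm]

lemma frobInner_self_nonneg (X : Matrix (Fin m) (Fin n) ℝ) : 0 ≤ frobInner X X :=
  Finset.sum_nonneg fun i _ => Finset.sum_nonneg fun j _ => mul_self_nonneg _

lemma frobNorm_nonneg (X : Matrix (Fin m) (Fin n) ℝ) : 0 ≤ frobNorm X := Real.sqrt_nonneg _

lemma frobNorm_sq (X : Matrix (Fin m) (Fin n) ℝ) : frobNorm X ^ 2 = frobInner X X :=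
  Real.sq_sqrt (frobInner_self_nonneg X)

lemma frobInner_smul_left (c : ℝ) (X Y : Matrix (Fin m) (Fin n) ℝ) :
    frobInner (c • X) Y = c * frobInner X Y := by
  simp [frobInner, Finset.mul_sum, mul_assoc]

lemma frobInner_smul_right (c : ℝ) (X Y : Matrix (Fin m) (Fin n) ℝ) :
    frobInner X (c • Y) = c * frobInner X Y := by
  rw [frobInner_comm, frobInner_smul_left, frobInner_comm]

lemma frobNorm_smul (c : ℝ) (X : Matrix (Fin m) (Fin n) ℝ) :
    frobNorm (c • X) = |c| * frobNorm X := by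
  unfold frobNorm
  rw [frobInner_smul_left, frobInner_smul_right, ← mul_assoc, ← sq,
    Real.sqrt_mul (sq_nonneg c), Real.sqrt_sq_eq_abs]

lemma frobNorm_zero : frobNorm (0 : Matrix (Fin m) (Fin n) ℝ) = 0 := by
  simp [frobNorm, frobInner]

lemma frobNorm_eq_zero {X : Matrix (Fin m) (Fin n) ℝ} (h : frobNorm X = 0) : X = 0 := by
  have h0 : frobInner X X = 0 :=
    (Real.sqrt_eq_zero (frobInner_self_nonneg X)).mp h
  ext i j
  have hrow : ∀ i, 0 ≤ ∑ j, X i j * X i j :=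
    fun i => Finset.sum_nonneg fun j _ => mul_self_nonneg _
  have h1 : ∑ j, X i j * X i j ≤ 0 := by
    have := Finset.single_le_sum (f := fun i => ∑ j, X i j * X i j)
      (fun i _ => hrow i) (Finset.mem_univ i)
    simpa [frobInner, h0] using this.trans_eq h0
  have h2 : X i j * X i j ≤ 0 := by
    have := Finset.single_le_sum (f := fun j => X i j * X i j)
      (fun j _ => mul_self_nonneg _) (Finset.mem_univ j)
    linarith
  have : X i j * X i j = 0 := le_antisymm h2 (mul_self_nonneg _)
  simpa [mul_self_eq_zero] using this

lemma frobInner_add_add (X Y : Matrix (Fin m) (Fin n) ℝ) :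
    frobInner (X + Y) (X + Y) = frobInner X X + 2 * frobInner X Y + frobInner Y Y := by
  simp only [frobInner, Matrix.add_apply, Finset.mul_sum, two_mul]
  rw [← Finset.sum_add_distrib]
  simp only [← Finset.sum_add_distrib]
  apply Finset.sum_congr rfl
  intro i _
  apply Finset.sum_congr rfl
  intro j _
  ring

lemma frobInner_sub_sub (X Y : Matrix (Fin m) (Fin n) ℝ) :
    frobInner (X - Y) (X - Y) = frobInner X X - 2 * frobInner X Y + frobInner Y Y := by
  simp only [frobInner, Matrix.sub_apply, Finset.mul_sum, two_mul]
  rw [← Finset.sum_sub_distrib]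
  simp only [← Finset.sum_add_distrib, ← Finset.sum_sub_distrib]
  apply Finset.sum_congr rfl
  intro i _
  apply Finset.sum_congr rfl
  intro j _
  ring

end AdmiraAux
namespace AdmiraAux

lemma inner_rip {m n p : ℕ} {δ : ℝ}
    (A : Matrix (Fin m) (Fin n) ℝ →ₗ[ℝ] EuclideanSpace ℝ (Fin p))
    (X Y : Matrix (Fin m) (Fin n) ℝ)
    (h : ∀ s t : ℝ, |‖A (s • X + t • Y)‖ ^ 2 - frobNorm (s • X + t • Y) ^ 2| ≤
      δ * frobNorm (s • X + t • Y) ^ 2) :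
    |(inner ℝ (A X) (A Y) : ℝ) - frobInner X Y| ≤ δ * frobNorm X * frobNorm Y := by
  by_cases hX : X = 0
  · subst hX; simp [frobInner, frobNorm_zero]
  by_cases hY : Y = 0
  · subst hY; simp [frobInner, frobNorm_zero]
  set a := frobNorm X with ha_def
  set b := frobNorm Y with hb_def
  have ha : 0 < a := (frobNorm_nonneg X).lt_of_ne (fun hh => hX (frobNorm_eq_zero hh.symm))
  have hb : 0 < b := (frobNorm_nonneg Y).lt_of_ne (fun hh => hY (frobNorm_eq_zero hh.symm))
  set X' := a⁻¹ • X with hX'_def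
  set Y' := b⁻¹ • Y with hY'_def
  have hXn : frobNorm X' = 1 := by
    rw [hX'_def, frobNorm_smul, abs_of_pos (inv_pos.mpr ha), inv_mul_cancel₀ ha.ne']
  have hYn : frobNorm Y' = 1 := by
    rw [hY'_def, frobNorm_smul, abs_of_pos (inv_pos.mpr hb), inv_mul_cancel₀ hb.ne']
  have h1 := h a⁻¹ b⁻¹
  have h2 := h a⁻¹ (-b⁻¹)
  have hsub : a⁻¹ • X + (-b⁻¹) • Y = X' - Y' := by
    rw [hX'_def, hY'_def]; module
  rw [hsub] at h2
  -- expansions of norms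
  have eA1 : ‖A (X' + Y')‖ ^ 2 =
      ‖A X'‖ ^ 2 + 2 * (inner ℝ (A X') (A Y') : ℝ) + ‖A Y'‖ ^ 2 := by
    rw [map_add]; exact norm_add_sq_real _ _
  have eA2 : ‖A (X' - Y')‖ ^ 2 =
      ‖A X'‖ ^ 2 - 2 * (inner ℝ (A X') (A Y') : ℝ) + ‖A Y'‖ ^ 2 := by
    rw [map_sub]; exact norm_sub_sq_real _ _
  have eF1 : frobNorm (X' + Y') ^ 2 = 2 + 2 * frobInner X' Y' := by
    rw [frobNorm_sq, frobInner_add_add, ← frobNorm_sq, ← frobNorm_sq, hXn, hYn]; ring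
  have eF2 : frobNorm (X' - Y') ^ 2 = 2 - 2 * frobInner X' Y' := by
    rw [frobNorm_sq, frobInner_sub_sub, ← frobNorm_sq, ← frobNorm_sq, hXn, hYn]; ring
  rw [eA1, eF1] at h1
  rw [eA2, eF2] at h2
  have hq : |(inner ℝ (A X') (A Y') : ℝ) - frobInner X' Y'| ≤ δ := by
    have u1 := (abs_le.mp h1).2
    have l1 := (abs_le.mp h1).1
    have u2 := (abs_le.mp h2).2
    have l2 := (abs_le.mp h2).1
    rw [abs_le]
    constructor <;> nlinarith [sq_nonneg (‖A X'‖ - ‖A Y'‖)]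
  -- scaling back
  have eI : (inner ℝ (A X') (A Y') : ℝ) = a⁻¹ * (b⁻¹ * (inner ℝ (A X) (A Y) : ℝ)) := by
    rw [hX'_def, hY'_def, map_smul, map_smul, real_inner_smul_left, real_inner_smul_right]
  have eF : frobInner X' Y' = a⁻¹ * (b⁻¹ * frobInner X Y) := by
    rw [hX'_def, hY'_def, frobInner_smul_left, frobInner_smul_right]
  have hscale : (inner ℝ (A X) (A Y) : ℝ) - frobInner X Y =
      (a * b) * ((inner ℝ (A X') (A Y') : ℝ) - frobInner X' Y') := by
    rw [eI, eF]; field_simp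
  rw [hscale, abs_mul, abs_of_pos (mul_pos ha hb)]
  calc a * b * |(inner ℝ (A X') (A Y') : ℝ) - frobInner X' Y'|
      ≤ a * b * δ := mul_le_mul_of_nonneg_left hq (mul_pos ha hb).le
    _ = δ * a * b := by ring

end AdmiraAux

set_option maxHeartbeats 1000000 in
open AdmiraAux in
/-- ADMiRA least-squares step, projected component (equation (59)):
`‖P_{Si}(V − X*)‖_F ≤ δ₃ ‖V − X*‖_F + √(1+δ₂) ‖ε‖₂`. -/
theorem admira_projected_component_bound {m n p k : ℕ}
    (δ₂ δ₃ : ℝ)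
    (A : Matrix (Fin m) (Fin n) ℝ →ₗ[ℝ] EuclideanSpace ℝ (Fin p))
    (Astar : EuclideanSpace ℝ (Fin p) →ₗ[ℝ] Matrix (Fin m) (Fin n) ℝ)
    (hadj : ∀ (X : Matrix (Fin m) (Fin n) ℝ) (v : EuclideanSpace ℝ (Fin p)),
      (inner ℝ (A X) v : ℝ) = frobInner X (Astar v))
    (hRIP2 : ∀ X : Matrix (Fin m) (Fin n) ℝ, X.rank ≤ 2 * k →
      (1 - δ₂) * frobNorm X ^ 2 ≤ ‖A X‖ ^ 2 ∧ ‖A X‖ ^ 2 ≤ (1 + δ₂) * frobNorm X ^ 2)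
    (hRIP3 : ∀ X : Matrix (Fin m) (Fin n) ℝ, X.rank ≤ 3 * k →
      (1 - δ₃) * frobNorm X ^ 2 ≤ ‖A X‖ ^ 2 ∧ ‖A X‖ ^ 2 ≤ (1 + δ₃) * frobNorm X ^ 2)
    (Xstar : Matrix (Fin m) (Fin n) ℝ) (hXstar : Xstar.rank ≤ k)
    (ε y : EuclideanSpace ℝ (Fin p)) (hy : y = A Xstar + ε)
    -- projection onto span(S_i), a subspace of rank-≤2k matrices
    (PSi : Matrix (Fin m) (Fin n) ℝ →ₗ[ℝ] Matrix (Fin m) (Fin n) ℝ)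
    (hPSi_idem : ∀ X, PSi (PSi X) = PSi X)
    (hPSi_sa : ∀ X Y, frobInner (PSi X) Y = frobInner X (PSi Y))
    (hPSi_rank : ∀ X, (PSi X).rank ≤ 2 * k)
    -- projection onto span(S_i ∪ X*), of rank at most 3k
    (Q : Matrix (Fin m) (Fin n) ℝ →ₗ[ℝ] Matrix (Fin m) (Fin n) ℝ)
    (hQ_idem : ∀ X, Q (Q X) = Q X)
    (hQ_sa : ∀ X Y, frobInner (Q X) Y = frobInner X (Q Y))
    (hQ_rank : ∀ X, (Q X).rank ≤ 3 * k)
    (hQ_PSi : ∀ X, Q (PSi X) = PSi X)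
    (hQ_Xstar : Q Xstar = Xstar)
    -- V minimizes the data error over span(S_i)
    (V : Matrix (Fin m) (Fin n) ℝ) (hV_mem : PSi V = V)
    (hV_min : ∀ Z : Matrix (Fin m) (Fin n) ℝ, PSi Z = Z →
      ‖y - A V‖ ≤ ‖y - A Z‖) :
    frobNorm (PSi (V - Xstar)) ≤
      δ₃ * frobNorm (V - Xstar) + Real.sqrt (1 + δ₂) * ‖ε‖ := by
  -- optimality condition: the residual is orthogonal to the range of A ∘ PSi
  have hopt : ∀ U : Matrix (Fin m) (Fin n) ℝ,
      (inner ℝ (y - A V) (A (PSi U)) : ℝ) = 0 := by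
    intro U
    set W' := PSi U with hW'
    set c : ℝ := inner ℝ (y - A V) (A W') with hc
    set b : ℝ := ‖A W'‖ ^ 2 with hbdef
    have hb : 0 ≤ b := sq_nonneg _
    have key : ∀ t : ℝ, 0 ≤ t ^ 2 * b - 2 * t * c := by
      intro t
      have hmem : PSi (V + t • W') = V + t • W' := by
        rw [map_add, map_smul, hV_mem, hW', hPSi_idem]
      have hle := hV_min _ hmem
      have h2 : ‖y - A V‖ ^ 2 ≤ ‖y - A (V + t • W')‖ ^ 2 :=
        pow_le_pow_left₀ (norm_nonneg _) hle 2
      have h3 : y - A (V + t • W') = (y - A V) - t • (A W') := by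
        rw [map_add, map_smul]; abel
      have hexp := norm_sub_sq_real (y - A V) (t • (A W'))
      rw [real_inner_smul_right, norm_smul] at hexp
      have h4 : (‖t‖ * ‖A W'‖) ^ 2 = t ^ 2 * b := by
        rw [hbdef, Real.norm_eq_abs, mul_pow, sq_abs]
      rw [h4, ← hc] at hexp
      rw [h3, hexp] at h2
      linarith
    have hb1 : (0 : ℝ) < b + 1 := by linarith
    have h := key (c / (b + 1))
    have h' : 0 ≤ ((c / (b + 1)) ^ 2 * b - 2 * (c / (b + 1)) * c) * (b + 1) ^ 2 :=
      mul_nonneg h (sq_nonneg _)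
    have heq : ((c / (b + 1)) ^ 2 * b - 2 * (c / (b + 1)) * c) * (b + 1) ^ 2 =
        c ^ 2 * b - 2 * c ^ 2 * (b + 1) := by
      field_simp
    rw [heq] at h'
    have hc2 : c ^ 2 ≤ 0 := by nlinarith [mul_nonneg (sq_nonneg c) hb]
    have : c = 0 := by
      have := le_antisymm hc2 (sq_nonneg c)
      exact pow_eq_zero_iff (by norm_num) |>.mp this
    rw [hc] at this
    exact this
  set D := V - Xstar with hD_def
  set W := PSi D with hW_def
  have hQV : Q V = V := by
    conv_lhs => rw [← hV_mem]
    rw [hQ_PSi, hV_mem]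
  have hQD : Q D = D := by rw [hD_def, map_sub, hQV, hQ_Xstar]
  have hQW : Q W = W := hQ_PSi D
  have hrankD : D.rank ≤ 3 * k := by have := hQ_rank D; rwa [hQD] at this
  have hrankW : W.rank ≤ 2 * k := hPSi_rank D
  -- the inner-product RIP bound
  have hinner : |(inner ℝ (A W) (A D) : ℝ) - frobInner W D| ≤
      δ₃ * frobNorm W * frobNorm D := by
    apply inner_rip
    intro s t
    have hQc : Q (s • W + t • D) = s • W + t • D := by
      rw [map_add, map_smul, map_smul, hQW, hQD]
    have hr : (s • W + t • D).rank ≤ 3 * k := by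
      have := hQ_rank (s • W + t • D); rwa [hQc] at this
    have := hRIP3 _ hr
    rw [abs_le]
    constructor <;> linarith [this.1, this.2]
  -- ‖W‖² = ⟨W, D⟩
  have hWW : frobNorm W ^ 2 = frobInner W D := by
    rw [frobNorm_sq, hW_def]
    rw [show frobInner (PSi D) (PSi D) = frobInner D (PSi (PSi D)) from hPSi_sa D (PSi D),
      hPSi_idem]
    exact frobInner_comm D (PSi D)
  -- ⟨A W, A D⟩ = ⟨A W, ε⟩
  have hAD : A D = ε - (y - A V) := by
    rw [hD_def, map_sub, hy]; abel
  have hAWAD : (inner ℝ (A W) (A D) : ℝ) = inner ℝ (A W) ε := by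
    have h0 : (inner ℝ (A W) (y - A V) : ℝ) = 0 := by
      rw [real_inner_comm]; exact hopt D
    rw [hAD, inner_sub_right, h0, sub_zero]
  by_cases hD0 : D = 0
  · have : W = 0 := by rw [hW_def, hD0, map_zero]
    rw [this, hD0, frobNorm_zero]
    have : 0 ≤ Real.sqrt (1 + δ₂) * ‖ε‖ :=
      mul_nonneg (Real.sqrt_nonneg _) (norm_nonneg _)
    linarith
  have hd : 0 < frobNorm D :=
    (frobNorm_nonneg D).lt_of_ne (fun hh => hD0 (frobNorm_eq_zero hh.symm))
  have hδ3 : 0 ≤ δ₃ := by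
    have h := hRIP3 D hrankD
    have hf : 0 < frobNorm D ^ 2 := pow_pos hd 2
    have h2 := (mul_le_mul_iff_of_pos_right hf).mp (le_trans h.1 h.2)
    linarith
  by_cases hW0 : W = 0
  · rw [hW0, frobNorm_zero]
    have h1 : 0 ≤ Real.sqrt (1 + δ₂) * ‖ε‖ :=
      mul_nonneg (Real.sqrt_nonneg _) (norm_nonneg _)
    have h2 : 0 ≤ δ₃ * frobNorm D := mul_nonneg hδ3 hd.le
    linarith
  have hw : 0 < frobNorm W :=
    (frobNorm_nonneg W).lt_of_ne (fun hh => hW0 (frobNorm_eq_zero hh.symm))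
  have hδ2 : 0 ≤ δ₂ := by
    have h := hRIP2 W hrankW
    have hf : 0 < frobNorm W ^ 2 := pow_pos hw 2
    have h2 := (mul_le_mul_iff_of_pos_right hf).mp (le_trans h.1 h.2)
    linarith
  have hAW : ‖A W‖ ≤ Real.sqrt (1 + δ₂) * frobNorm W := by
    have h1 := (hRIP2 W hrankW).2
    have h2 : ‖A W‖ = Real.sqrt (‖A W‖ ^ 2) := (Real.sqrt_sq (norm_nonneg _)).symm
    rw [h2]
    calc Real.sqrt (‖A W‖ ^ 2) ≤ Real.sqrt ((1 + δ₂) * frobNorm W ^ 2) :=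
          Real.sqrt_le_sqrt h1
      _ = Real.sqrt (1 + δ₂) * frobNorm W := by
          rw [Real.sqrt_mul (by linarith), Real.sqrt_sq (frobNorm_nonneg W)]
  have hCS : (inner ℝ (A W) ε : ℝ) ≤ ‖A W‖ * ‖ε‖ := real_inner_le_norm _ _
  have hmain : frobNorm W * frobNorm W ≤
      (δ₃ * frobNorm D + Real.sqrt (1 + δ₂) * ‖ε‖) * frobNorm W := by
    have habs := abs_le.mp hinner
    have hAWe : ‖A W‖ * ‖ε‖ ≤ Real.sqrt (1 + δ₂) * frobNorm W * ‖ε‖ :=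
      mul_le_mul_of_nonneg_right hAW (norm_nonneg _)
    have hsq : frobNorm W * frobNorm W = frobNorm W ^ 2 := (sq (frobNorm W)).symm
    rw [hsq, hWW]
    calc frobInner W D
        ≤ (inner ℝ (A W) (A D) : ℝ) + δ₃ * frobNorm W * frobNorm D := by
          linarith [habs.1]
      _ = (inner ℝ (A W) ε : ℝ) + δ₃ * frobNorm W * frobNorm D := by rw [hAWAD]
      _ ≤ ‖A W‖ * ‖ε‖ + δ₃ * frobNorm W * frobNorm D := by linarith [hCS]
      _ ≤ Real.sqrt (1 + δ₂) * frobNorm W * ‖ε‖ + δ₃ * frobNorm W * frobNorm D := by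
          linarith [hAWe]
      _ = (δ₃ * frobNorm D + Real.sqrt (1 + δ₂) * ‖ε‖) * frobNorm W := by ring
  exact le_of_mul_le_mul_right hmain hw
end
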